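/- Let n be a natural number and p : Fin n → ℝ with 0 ≤ p i ≤ 1 for every i. Let λ denote Lebesgue measure on ℝ restricted to the interval [0,1] (a probability measure), and define Φ : ℝ → (Fin n → Bool) by Φ u i = decide (u < p i). Then the pushforward measure Φ_* λ is a coupling of the Bernoulli family p (its i-th marginal assigns probability p i to true for each i), and it is multimaximal: (Φ_* λ) {f | f i = f j} = 1 − |p i − p j| for all i, j. -/

import Mathlib

open MeasureTheory

lemma meas_decide (c : ℝ) : Measurable fun u : ℝ => decide (u < c) := by
  have h : (fun u : ℝ => decide (u < c))
      = (Set.Iio c).piecewise (fun _ => true) (fun _ => false) := by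
    funext u
    by_cases h : u < c <;> simp [Set.piecewise, Set.mem_Iio, h]
  rw [h]
  exact Measurable.piecewise measurableSet_Iio measurable_const measurable_const

lemma restrict_Ico (a b : ℝ) (ha : 0 ≤ a) (hb : b ≤ 1) :
    (volume.restrict (Set.Icc (0:ℝ) 1)) (Set.Ico a b) = ENNReal.ofReal (b - a) := by
  rw [Measure.restrict_apply measurableSet_Ico]
  have : Set.Ico a b ∩ Set.Icc (0:ℝ) 1 = Set.Ico a b := by
    apply Set.inter_eq_left.mpr
    intro u hu
    exact ⟨ha.trans hu.1, le_of_lt (hu.2.trans_le hb)⟩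
  rw [this, Real.volume_Ico]

theorem quantile_coupling_is_multimaximal (n : ℕ) (p : Fin n → ℝ)
    (hp : ∀ i, 0 ≤ p i ∧ p i ≤ 1) :
    IsProbabilityMeasure
      ((volume.restrict (Set.Icc (0:ℝ) 1)).map (fun u i => decide (u < p i))) ∧
    (∀ i, (((volume.restrict (Set.Icc (0:ℝ) 1)).map (fun u i => decide (u < p i)))
        {f : Fin n → Bool | f i = true}).toReal = p i) ∧
    (∀ i j, (((volume.restrict (Set.Icc (0:ℝ) 1)).map (fun u i => decide (u < p i)))
        {f : Fin n → Bool | f i = f j}).toReal = 1 - |p i - p j|) := by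
  have hprob : IsProbabilityMeasure (volume.restrict (Set.Icc (0:ℝ) 1)) := by
    constructor
    rw [Measure.restrict_apply_univ, Real.volume_Icc]
    norm_num
  have hΦ : Measurable fun u : ℝ => fun i : Fin n => decide (u < p i) :=
    measurable_pi_lambda _ fun i => meas_decide (p i)
  refine ⟨Measure.isProbabilityMeasure_map hΦ.aemeasurable, ?_, ?_⟩
  · intro i
    have hset : MeasurableSet {f : Fin n → Bool | f i = true} := by
      have := measurable_pi_apply (X := fun _ : Fin n => Bool) i (measurableSet_singleton true)
      simpa [Set.preimage, Set.mem_singleton_iff] using this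
    rw [Measure.map_apply hΦ hset]
    have hpre : (fun u : ℝ => fun i : Fin n => decide (u < p i)) ⁻¹'
        {f : Fin n → Bool | f i = true} = Set.Ico 0 (p i) ∪ Set.Iio 0 := by
      ext u
      simp only [Set.mem_preimage, Set.mem_setOf_eq, decide_eq_true_eq,
        Set.mem_union, Set.mem_Ico, Set.mem_Iio]
      constructor
      · intro h
        rcases le_or_gt 0 u with h0 | h0
        · exact Or.inl ⟨h0, h⟩
        · exact Or.inr h0
      · rintro (⟨_, h⟩ | h)
        · exact h
        · exact h.trans_le (hp i).1
    rw [hpre]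
    have hIio : (volume.restrict (Set.Icc (0:ℝ) 1)) (Set.Iio 0) = 0 := by
      rw [Measure.restrict_apply measurableSet_Iio]
      have : Set.Iio (0:ℝ) ∩ Set.Icc 0 1 = ∅ := by
        ext u
        simp only [Set.mem_inter_iff, Set.mem_Iio, Set.mem_Icc,
          Set.mem_empty_iff_false, iff_false, not_and, not_le]
        intro h1 h2; linarith
      rw [this]; simp
    rw [measure_union (by
        simp only [Set.disjoint_left, Set.mem_Ico, Set.mem_Iio]
        rintro u ⟨h1, _⟩ h2; linarith) measurableSet_Iio,
      hIio, add_zero, restrict_Ico 0 (p i) le_rfl (hp i).2]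
    simp [ENNReal.toReal_ofReal (hp i).1]
  · intro i j
    have hset : MeasurableSet {f : Fin n → Bool | f i = f j} :=
      measurableSet_eq_fun (measurable_pi_apply i) (measurable_pi_apply j)
    rw [Measure.map_apply hΦ hset]
    set a := min (p i) (p j) with ha
    set b := max (p i) (p j) with hb
    have hpre : (fun u : ℝ => fun i : Fin n => decide (u < p i)) ⁻¹'
        {f : Fin n → Bool | f i = f j} = (Set.Ico a b)ᶜ := by
      ext u
      simp only [Set.mem_preimage, Set.mem_setOf_eq, decide_eq_decide,
        Set.mem_compl_iff, Set.mem_Ico, not_and, not_lt, ha, hb]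
      constructor
      · intro h hle
        rcases le_total (p i) (p j) with hij | hij
        · simp only [min_eq_left hij, max_eq_right hij] at hle ⊢
          by_contra hu
          exact absurd (h.mpr (not_le.mp hu)) (not_lt.mpr hle)
        · simp only [min_eq_right hij, max_eq_left hij] at hle ⊢
          by_contra hu
          exact absurd (h.mp (not_le.mp hu)) (not_lt.mpr hle)
      · intro h
        constructor
        · intro hi
          by_contra hj
          have h1 : a ≤ u := min_le_of_right_le (not_lt.mp hj)
          have h2 : u < b := lt_max_of_lt_left hi
          exact absurd (h h1) (not_le.mpr h2)
        · intro hj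
          by_contra hi
          have h1 : a ≤ u := min_le_of_left_le (not_lt.mp hi)
          have h2 : u < b := lt_max_of_lt_right hj
          exact absurd (h h1) (not_le.mpr h2)
    rw [hpre]
    have h0a : 0 ≤ a := le_min (hp i).1 (hp j).1
    have hb1 : b ≤ 1 := max_le (hp i).2 (hp j).2
    have hab : a ≤ b := min_le_max
    rw [prob_compl_eq_one_sub measurableSet_Ico, restrict_Ico a b h0a hb1]
    have hle : ENNReal.ofReal (b - a) ≤ 1 := by
      rw [← ENNReal.ofReal_one]
      exact ENNReal.ofReal_le_ofReal (by linarith)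
    rw [ENNReal.toReal_sub_of_le hle ENNReal.one_ne_top]
    rw [ENNReal.toReal_ofReal (by linarith), ENNReal.toReal_one]
    congr 1
    rw [ha, hb, abs_sub_comm]
    exact max_sub_min_eq_abs (p i) (p j)
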